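/- Let X, Y be topological spaces and let 1 ≤ α, β be countable ordinals with δ = max{α,β}·ω (the least additively closed ordinal strictly above both). If f : X → Y is such that the preimage of every Σ⁰_β set is Σ⁰_α, then for every γ < δ the preimage under f of every Σ⁰_γ set is Σ⁰_{γ'} for some γ' < δ; that is, f is Σ⁰_{<δ}-measurable with respect to the whole hierarchy below δ. -/

import Mathlib

open Ordinal

/-- The Borel pointclasses `Σ⁰_α(X)` for an arbitrary topological space `X`:
`Σ⁰₁` is the class of open sets, `Σ⁰₂` is the class of countable unions of
differences of open sets, and for `α > 2`, `Σ⁰_α` is the class of countable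
unions of complements of sets from levels `β < α`. -/
inductive SigmaLev {X : Type*} [TopologicalSpace X] : Ordinal.{0} → Set X → Prop
  | open_ {U : Set X} (h : IsOpen U) : SigmaLev 1 U
  | diff (f g : ℕ → Set X) (hf : ∀ n, IsOpen (f n)) (hg : ∀ n, IsOpen (g n)) :
      SigmaLev 2 (⋃ n, f n \ g n)
  | union {α : Ordinal} (hα : 2 < α) (β : ℕ → Ordinal) (hβ : ∀ n, β n < α)
      (A : ℕ → Set X) (h : ∀ n, SigmaLev (β n) (A n)ᶜ) : SigmaLev α (⋃ n, A n)

section Aux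

variable {X : Type*} [TopologicalSpace X]

/-- Every open set is `Σ⁰₂`. -/
lemma SigmaLev.open_two {U : Set X} (h : IsOpen U) : SigmaLev 2 U := by
  have e : U = ⋃ _ : ℕ, U \ (∅ : Set X) := by simp [Set.iUnion_const]
  rw [e]
  exact .diff (fun _ => U) (fun _ => ∅) (fun _ => h) (fun _ => isOpen_empty)

/-- The complement of an open set is `Σ⁰₂`. -/
lemma SigmaLev.compl_open_two {U : Set X} (h : IsOpen U) : SigmaLev 2 Uᶜ := by
  have e : Uᶜ = ⋃ _ : ℕ, (Set.univ : Set X) \ U := by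
    simp [Set.compl_eq_univ_diff, Set.iUnion_const]
  rw [e]
  exact .diff (fun _ => Set.univ) (fun _ => U) (fun _ => isOpen_univ) (fun _ => h)

/-- The complement of a difference of two open sets is `Σ⁰₂`. -/
lemma SigmaLev.compl_diff_two {U V : Set X} (hU : IsOpen U) (hV : IsOpen V) :
    SigmaLev 2 ((U \ V)ᶜ) := by
  classical
  have e : (U \ V)ᶜ = ⋃ n : ℕ,
      (if n = 0 then (Set.univ : Set X) else V) \ (if n = 0 then U else ∅) := by
    ext x
    simp only [Set.mem_compl_iff, Set.mem_diff, Set.mem_iUnion, not_and, not_not]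
    constructor
    · intro hx
      by_cases hxU : x ∈ U
      · exact ⟨1, by simp [hx hxU]⟩
      · exact ⟨0, by simp [hxU]⟩
    · rintro ⟨n, hn⟩ hxU
      by_cases h0 : n = 0
      · simp [h0] at hn; exact absurd hxU hn
      · simp [h0] at hn; exact hn
  rw [e]
  exact .diff _ _ (fun n => by by_cases h0 : n = 0 <;> simp [h0, hV, isOpen_univ])
    (fun n => by by_cases h0 : n = 0 <;> simp [h0, hU, isOpen_empty])

/-- A set whose complement lies at some level `< γ` (with `2 < γ`) is `Σ⁰_γ`. -/
lemma SigmaLev.const_union {γ₀ γ : Ordinal} {A : Set X} (h2 : 2 < γ) (hlt : γ₀ < γ)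
    (h : SigmaLev γ₀ Aᶜ) : SigmaLev γ A := by
  have e : A = ⋃ _ : ℕ, A := (Set.iUnion_const A).symm
  rw [e]
  exact .union h2 (fun _ => γ₀) (fun _ => hlt) (fun _ => A) (fun _ => h)

/-- Monotonicity of the pointclasses. -/
lemma SigmaLev.mono {γ γ' : Ordinal} {A : Set X} (h : SigmaLev γ A) (hle : γ ≤ γ') :
    SigmaLev γ' A := by
  rcases eq_or_lt_of_le hle with rfl | hlt
  · exact h
  · cases h with
    | open_ hU =>
      have h2 : (2 : Ordinal) ≤ γ' := by
        have := Order.succ_le_of_lt hlt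
        rwa [← Ordinal.add_one_eq_succ, one_add_one_eq_two] at this
      rcases eq_or_lt_of_le h2 with rfl | h2'
      · exact SigmaLev.open_two hU
      · exact SigmaLev.const_union h2' h2' (SigmaLev.compl_open_two hU)
    | diff f g hf hg =>
      exact .union hlt (fun _ => 2) (fun _ => hlt) (fun n => f n \ g n)
        (fun n => SigmaLev.compl_diff_two (hf n) (hg n))
    | union hα₀ β hβ B hB =>
      exact .union (hα₀.trans hlt) β (fun n => (hβ n).trans hlt) B hB

/-- Levels of the hierarchy are at least `1`, i.e. equal `1` or at least `2`. -/
lemma SigmaLev.one_or_two_le {γ : Ordinal} {A : Set X} (h : SigmaLev γ A) :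
    γ = 1 ∨ 2 ≤ γ := by
  cases h with
  | open_ hU => exact Or.inl rfl
  | diff f g hf hg => exact Or.inr le_rfl
  | union hα₀ β hβ B hB => exact Or.inr hα₀.le

/-- Inversion at level `1`: a `Σ⁰₁` set is open. -/
lemma SigmaLev.one_inv {γ : Ordinal} {A : Set X} (h : SigmaLev γ A) (hγ : γ = 1) :
    IsOpen A := by
  cases h with
  | open_ hU => exact hU
  | diff f g hf hg => exact absurd hγ (by norm_num)
  | union hα₀ β hβ B hB => exact absurd (hγ ▸ hα₀) (by norm_num)

/-- The complement of a `Σ⁰_γ` set is `Σ⁰_{γ+1}`. -/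
lemma SigmaLev.compl_succ {γ : Ordinal} {A : Set X} (h : SigmaLev γ A) :
    SigmaLev (γ + 1) Aᶜ := by
  rcases h.one_or_two_le with rfl | h2
  · -- `A` is open
    have hU : IsOpen A := h.one_inv rfl
    rw [one_add_one_eq_two]
    exact SigmaLev.compl_open_two hU
  · exact SigmaLev.const_union (lt_of_le_of_lt h2 (lt_add_one γ)) (lt_add_one γ)
      (by rw [compl_compl]; exact h)

/-- Inversion at level `2`. -/
lemma SigmaLev.two_inv {γ : Ordinal} {A : Set X} (h : SigmaLev γ A) (hγ : γ = 2) :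
    ∃ f g : ℕ → Set X, (∀ n, IsOpen (f n)) ∧ (∀ n, IsOpen (g n)) ∧
      A = ⋃ n, f n \ g n := by
  cases h with
  | open_ hU => exact absurd hγ (by norm_num)
  | diff f g hf hg => exact ⟨f, g, hf, hg, rfl⟩
  | union hα₀ β hβ B hB => exact absurd (hγ ▸ hα₀) (lt_irrefl _)

/-- Inversion at levels `> 2`. -/
lemma SigmaLev.gt_two_inv {γ : Ordinal} {A : Set X} (h : SigmaLev γ A) (hγ : 2 < γ) :
    ∃ (β : ℕ → Ordinal) (B : ℕ → Set X), (∀ n, β n < γ) ∧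
      (∀ n, SigmaLev (β n) (B n)ᶜ) ∧ A = ⋃ n, B n := by
  cases h with
  | open_ hU => exact absurd hγ (by norm_num)
  | diff f g hf hg => exact absurd hγ (lt_irrefl _)
  | union hα₀ β hβ B hB => exact ⟨β, B, hβ, hB, rfl⟩

/-- Reindexing a union over `ℕ ⊕ ℕ` via an equivalence with `ℕ`. -/
lemma iUnion_elim_comp {P Q : ℕ → Set X} (e : ℕ ≃ (ℕ ⊕ ℕ)) :
    ⋃ k, Sum.elim P Q (e k) = (⋃ n, P n) ∪ (⋃ n, Q n) := by
  ext x
  simp only [Set.mem_iUnion, Set.mem_union]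
  constructor
  · rintro ⟨k, hk⟩
    rcases hs : e k with n | n <;> rw [hs] at hk
    · exact Or.inl ⟨n, hk⟩
    · exact Or.inr ⟨n, hk⟩
  · rintro (⟨n, hn⟩ | ⟨n, hn⟩)
    · exact ⟨e.symm (.inl n), by simpa using hn⟩
    · exact ⟨e.symm (.inr n), by simpa using hn⟩

/-- Closure of the pointclasses (at levels `≥ 2`) under binary unions. -/
lemma SigmaLev.union2 {γ : Ordinal} {A B : Set X} (h2 : 2 ≤ γ)
    (hA : SigmaLev γ A) (hB : SigmaLev γ B) : SigmaLev γ (A ∪ B) := by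
  classical
  obtain e := (Denumerable.eqv (ℕ ⊕ ℕ)).symm
  rcases eq_or_lt_of_le h2 with rfl | h2'
  · obtain ⟨f, g, hf, hg, rfl⟩ := hA.two_inv rfl
    obtain ⟨f', g', hf', hg', rfl⟩ := hB.two_inv rfl
    have key : (⋃ n, f n \ g n) ∪ (⋃ n, f' n \ g' n) =
        ⋃ k, Sum.elim f f' (e k) \ Sum.elim g g' (e k) := by
      rw [← iUnion_elim_comp (P := fun n => f n \ g n) (Q := fun n => f' n \ g' n) e]
      refine Set.iUnion_congr fun k => ?_
      cases e k <;> rfl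
    rw [key]
    refine SigmaLev.diff (fun k => Sum.elim f f' (e k)) (fun k => Sum.elim g g' (e k))
      (fun k => ?_) (fun k => ?_)
    · rcases hs : e k with n | n <;> simp only [hs, Sum.elim_inl, Sum.elim_inr]
      · exact hf n
      · exact hf' n
    · rcases hs : e k with n | n <;> simp only [hs, Sum.elim_inl, Sum.elim_inr]
      · exact hg n
      · exact hg' n
  · obtain ⟨βa, Ba, hβa, hBa, rfl⟩ := hA.gt_two_inv h2'
    obtain ⟨βb, Bb, hβb, hBb, rfl⟩ := hB.gt_two_inv h2'
    have key : (⋃ n, Ba n) ∪ (⋃ n, Bb n) = ⋃ k, Sum.elim Ba Bb (e k) := by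
      rw [← iUnion_elim_comp (P := Ba) (Q := Bb) e]
    rw [key]
    refine SigmaLev.union h2' (fun k => Sum.elim βa βb (e k)) (fun k => ?_)
      (fun k => Sum.elim Ba Bb (e k)) (fun k => ?_)
    · rcases hs : e k with n | n <;> simp only [hs, Sum.elim_inl, Sum.elim_inr]
      · exact hβa n
      · exact hβb n
    · rcases hs : e k with n | n <;> simp only [hs, Sum.elim_inl, Sum.elim_inr]
      · exact hBa n
      · exact hBb n

end Aux

/-- If the preimage under `f` of every `Σ⁰_β` set is `Σ⁰_α` (for countable ordinals
`α, β ≥ 1`), then with `δ = max{α,β}·ω` (the least additively closed ordinal strictly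
above both), the preimage under `f` of every set in `Σ⁰_{<δ}` is again in `Σ⁰_{<δ}`. -/
theorem sigma_measurable_below_delta {X Y : Type*} [TopologicalSpace X]
    [TopologicalSpace Y] (α β : Ordinal) (hα : 1 ≤ α) (hβ : 1 ≤ β)
    (hα1 : α < ω_ 1) (hβ1 : β < ω_ 1) (f : X → Y)
    (hf : ∀ A : Set Y, SigmaLev β A → SigmaLev α (f ⁻¹' A)) :
    ∀ γ < max α β * ω, ∀ A : Set Y, SigmaLev γ A →
      ∃ γ' < max α β * ω, SigmaLev γ' (f ⁻¹' A) := by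
  intro γ hγ A hA
  have hfopen : ∀ U : Set Y, IsOpen U → SigmaLev α (f ⁻¹' U) :=
    fun U hU => hf U ((SigmaLev.open_ hU).mono hβ)
  have h21 : (2 : Ordinal) ≤ α + 1 := by
    calc (2 : Ordinal) = 1 + 1 := one_add_one_eq_two.symm
    _ ≤ α + 1 := add_le_add_left hα 1
  have h12 : (α : Ordinal) + 1 < α + 2 := (add_lt_add_iff_left α).2 one_lt_two
  have h22 : (2 : Ordinal) < α + 2 := by
    calc (2 : Ordinal) = 1 + 1 := one_add_one_eq_two.symm
    _ ≤ α + 1 := add_le_add_left hα 1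
    _ < α + 2 := h12
  -- Key claim: the preimage of a `Σ⁰_γ₀` set is `Σ⁰_{α + γ₀}`.
  have key : ∀ (γ₀ : Ordinal) (A : Set Y), SigmaLev γ₀ A →
      SigmaLev (α + γ₀) (f ⁻¹' A) := by
    intro γ₀ A h
    induction h with
    | @open_ U hU => exact (hfopen U hU).mono (le_self_add (a := α) (b := 1))
    | diff g₁ g₂ hg₁ hg₂ =>
      have h1 : ∀ n, SigmaLev (α + 1) ((f ⁻¹' g₁ n \ f ⁻¹' g₂ n)ᶜ) := by
        intro n
        have e : (f ⁻¹' g₁ n \ f ⁻¹' g₂ n)ᶜ = (f ⁻¹' g₁ n)ᶜ ∪ f ⁻¹' g₂ n := by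
          rw [Set.diff_eq, Set.compl_inter, compl_compl]
        rw [e]
        exact SigmaLev.union2 h21 (hfopen _ (hg₁ n)).compl_succ
          ((hfopen _ (hg₂ n)).mono (le_self_add (a := α) (b := 1)))
      have e2 : f ⁻¹' (⋃ n, g₁ n \ g₂ n) = ⋃ n, (f ⁻¹' g₁ n \ f ⁻¹' g₂ n) := by
        simp [Set.preimage_iUnion, Set.preimage_diff]
      rw [e2]
      exact .union h22 (fun _ => α + 1) (fun _ => h12) _ h1
    | @union α₀ hα₀ β' hβ' B hB ih =>
      rw [Set.preimage_iUnion]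
      exact .union (lt_of_lt_of_le hα₀ (by simpa using add_le_add_left (zero_le α) α₀))
        (fun n => α + β' n) (fun n => (add_lt_add_iff_left α).2 (hβ' n))
        (fun n => f ⁻¹' B n)
        (fun n => by rw [← Set.preimage_compl]; exact ih n)
  refine ⟨α + γ, ?_, key γ A hA⟩
  -- It remains to check `α + γ < max α β * ω`.
  obtain ⟨c, hc, hγc⟩ := (Ordinal.lt_mul_iff_of_isSuccLimit Ordinal.isSuccLimit_omega0).1 hγ
  obtain ⟨k, rfl⟩ := Ordinal.lt_omega0.1 hc
  have hmpos : (0 : Ordinal) < max α β := lt_of_lt_of_le zero_lt_one (hα.trans (le_max_left α β))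
  calc α + γ < max α β + max α β * k :=
        add_lt_add_of_le_of_lt (le_max_left α β) hγc
  _ = max α β * (1 + k) := by rw [mul_add, mul_one]
  _ < max α β * ω := by
      refine mul_lt_mul_of_pos_left ?_ hmpos
      have : ((1 + k : ℕ) : Ordinal) < ω := nat_lt_omega0 _
      simpa using this
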